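/- Let X ⊆ ℝ^d be a nonempty compact set and let closedBall(c, ρ) be a smallest enclosing ball of X. Then for every point z ∈ ℝ^d and every real number α ≥ ρ, if closedBall(c, α − √(α² − ρ²)) is contained in the open ball of center z and radius α, then X intersects the open ball of center z and radius α. -/

import Mathlib

open Metric Set RealInnerProductSpace

/-- `closedBall c ρ` is a smallest enclosing ball of `X`: it contains `X` and every
closed ball containing `X` has radius at least `ρ`. -/
def IsSmallestEnclosingBall {d : ℕ} (X : Set (EuclideanSpace ℝ (Fin d)))
    (c : EuclideanSpace ℝ (Fin d)) (ρ : ℝ) : Prop :=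
  X ⊆ Metric.closedBall c ρ ∧
    ∀ (c' : EuclideanSpace ℝ (Fin d)) (ρ' : ℝ), X ⊆ Metric.closedBall c' ρ' → ρ ≤ ρ'

set_option maxHeartbeats 800000 in
theorem stmt_12 {d : ℕ} (X : Set (EuclideanSpace ℝ (Fin d)))
    (hX : X.Nonempty) (hXc : IsCompact X)
    (c : EuclideanSpace ℝ (Fin d)) (ρ : ℝ)
    (hseb : IsSmallestEnclosingBall X c ρ) :
    ∀ (z : EuclideanSpace ℝ (Fin d)) (α : ℝ), ρ ≤ α →
      Metric.closedBall c (α - Real.sqrt (α ^ 2 - ρ ^ 2)) ⊆ Metric.ball z α →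
        (X ∩ Metric.ball z α).Nonempty := by
  obtain ⟨hseb1, hseb2⟩ := hseb
  have hseb : (X ⊆ Metric.closedBall c ρ) ∧ (∀ (c' : EuclideanSpace ℝ (Fin d)) (ρ' : ℝ), X ⊆ Metric.closedBall c' ρ' → ρ ≤ ρ') := ⟨hseb1, hseb2⟩
  intro z α hρα hsub
  by_contra hcon
  rw [Set.not_nonempty_iff_eq_empty] at hcon
  have hfar : ∀ x ∈ X, α ≤ dist x z := by
    intro x hx
    by_contra h
    push_neg at h
    exact Set.eq_empty_iff_forall_notMem.mp hcon x ⟨hx, Metric.mem_ball.mpr h⟩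
  obtain ⟨x₀, hx₀⟩ := hX
  have hρ0 : 0 ≤ ρ := le_trans dist_nonneg (hseb.1 hx₀)
  have hα0 : 0 ≤ α := hρ0.trans hρα
  set β := Real.sqrt (α ^ 2 - ρ ^ 2) with hβdef
  have hβ0 : 0 ≤ β := Real.sqrt_nonneg _
  have hβsq : β ^ 2 = α ^ 2 - ρ ^ 2 := Real.sq_sqrt (by nlinarith)
  have hβα : β ≤ α := by nlinarith
  by_cases hcz : c = z
  · have h1 := hfar x₀ hx₀
    have h2 : dist x₀ c ≤ ρ := hseb.1 hx₀
    have hρα' : ρ = α := by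
      rw [hcz, dist_comm] at h2; rw [dist_comm] at h1; linarith
    have hβz : β = 0 := by rw [hβdef, hρα']; simp
    have hmem : x₀ ∈ Metric.closedBall c (α - β) := by
      rw [hβz, sub_zero, Metric.mem_closedBall]
      linarith [hseb.1 hx₀ ]
    have := Metric.mem_ball.mp (hsub hmem)
    linarith [hfar x₀ hx₀]
  · by_cases hρz : ρ = 0
    · have hx0c : x₀ = c := by
        have := hseb.1 hx₀
        rw [Metric.mem_closedBall, hρz] at this
        exact dist_le_zero.mp this
      have hβα' : β = α := by
        have : β ^ 2 = α ^ 2 := by rw [hβsq, hρz]; ring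
        nlinarith
      have h1 := hfar x₀ hx₀
      rw [hx0c] at h1
      have hc : c ∈ Metric.closedBall c (α - β) := by
        rw [Metric.mem_closedBall, dist_self]; linarith
      have := Metric.mem_ball.mp (hsub hc)
      linarith
    have hρpos : 0 < ρ := lt_of_le_of_ne hρ0 (Ne.symm hρz)
    set v : EuclideanSpace ℝ (Fin d) := c - z with hvdef
    have hv : v ≠ 0 := sub_ne_zero.mpr hcz
    set D := ‖v‖ with hDdef
    have hD : 0 < D := norm_pos_iff.mpr hv
    have hDβ : D < β := by
      have hs0 : 0 ≤ (α - β) / D := div_nonneg (by linarith) hD.le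
      have hp : c + ((α - β) / D) • v ∈ Metric.closedBall c (α - β) := by
        rw [Metric.mem_closedBall, dist_eq_norm]
        have : c + ((α - β) / D) • v - c = ((α - β) / D) • v := by abel
        rw [this, norm_smul, Real.norm_eq_abs, abs_of_nonneg hs0]
        rw [div_mul_cancel₀ _ hD.ne']
      have hb := Metric.mem_ball.mp (hsub hp)
      rw [dist_eq_norm] at hb
      have heq : c + ((α - β) / D) • v - z = (1 + (α - β) / D) • v := by
        rw [add_smul, one_smul, hvdef]; abel
      rw [heq, norm_smul, Real.norm_eq_abs, abs_of_nonneg (by linarith)] at hb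
      have : (1 + (α - β) / D) * D = D + (α - β) := by
        field_simp
      rw [this] at hb
      linarith
    set δ := (β ^ 2 - D ^ 2) / 2 with hδdef
    have hδ : 0 < δ := by nlinarith
    set t := δ / D ^ 2 with htdef
    set c' : EuclideanSpace ℝ (Fin d) := c + t • v with hc'def
    have hDsq : D ^ 2 = ⟪v, v⟫ := (real_inner_self_eq_norm_sq v).symm
    have hkey : ∀ x ∈ X, dist x c' ^ 2 ≤ ρ ^ 2 - δ ^ 2 / D ^ 2 := by
      intro x hx
      have hxc : ‖x - c‖ ≤ ρ := by
        have := hseb.1 hx; rwa [Metric.mem_closedBall, dist_eq_norm] at this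
      have hxz : α ≤ ‖x - z‖ := by
        have := hfar x hx; rwa [dist_eq_norm] at this
      have hinner : δ ≤ ⟪x - c, v⟫ := by
        have hdecomp : x - z = (x - c) + v := by rw [hvdef]; abel
        have h1 : ‖x - z‖ ^ 2 = ‖x - c‖ ^ 2 + 2 * ⟪x - c, v⟫ + ‖v‖ ^ 2 := by
          rw [hdecomp]; exact norm_add_sq_real _ _
        nlinarith [norm_nonneg (x - z), norm_nonneg (x - c)]
      have hdec2 : x - c' = (x - c) - t • v := by rw [hc'def]; abel
      have h2 : ‖x - c'‖ ^ 2 = ‖x - c‖ ^ 2 - 2 * ⟪x - c, t • v⟫ + ‖t • v‖ ^ 2 := by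
        rw [hdec2]; exact norm_sub_sq_real _ _
      rw [real_inner_smul_right, norm_smul, Real.norm_eq_abs] at h2
      have ht0 : 0 ≤ t := le_of_lt (by positivity)
      rw [abs_of_nonneg ht0] at h2
      have htD : t * D ^ 2 = δ := by rw [htdef]; field_simp
      have h3 : t * δ ≤ t * ⟪x - c, v⟫ := mul_le_mul_of_nonneg_left hinner ht0
      have h4 : (t * ‖v‖) ^ 2 = t * (t * D ^ 2) := by rw [hDdef]; ring
      have h5 : t * δ = δ ^ 2 / D ^ 2 := by rw [htdef]; field_simp
      have h6 : ‖x - c‖ ^ 2 ≤ ρ ^ 2 := by nlinarith [norm_nonneg (x - c)]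
      rw [dist_eq_norm, h2, h4, htD]
      linarith
    set r := Real.sqrt (ρ ^ 2 - δ ^ 2 / D ^ 2) with hrdef
    have hXr : X ⊆ Metric.closedBall c' r := by
      intro x hx
      rw [Metric.mem_closedBall, hrdef]
      rw [show dist x c' = Real.sqrt (dist x c' ^ 2) by
        rw [Real.sqrt_sq dist_nonneg]]
      exact Real.sqrt_le_sqrt (hkey x hx)
    have hρr : ρ ≤ r := hseb.2 c' r hXr
    rw [hrdef] at hρr
    have : ρ ^ 2 ≤ ρ ^ 2 - δ ^ 2 / D ^ 2 := (Real.le_sqrt' hρpos).mp hρr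
    have hpos : 0 < δ ^ 2 / D ^ 2 := div_pos (by positivity) (by positivity)
    linarith
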